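/- Let b̃ ∈ ℝ^N be such that Q_{A,b̃} is nonempty, and define b ∈ ℝ^N by b_i := sup{a_iᵀx : x ∈ Q_{A,b̃}} for i = 1,…,N. Then b ∈ C_A, b ≤ b̃ componentwise, and Q_{A,b} = Q_{A,b̃}. -/

import Mathlib

open scoped RealInnerProductSpace
open Bornology Filter Module

noncomputable section

/-- `Q_{A,b} = {x ∈ ℝ^d : a_iᵀx ≤ b_i for all i}`. -/
def Qset {d N : ℕ} (a : Fin N → EuclideanSpace ℝ (Fin d)) (b : Fin N → ℝ) :
    Set (EuclideanSpace ℝ (Fin d)) :=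
  {x | ∀ i, ⟪a i, x⟫ ≤ b i}

/-- `C_A = {b : for every i there is x ∈ Q_{A,b} with a_iᵀx = b_i}`. -/
def CA {d N : ℕ} (a : Fin N → EuclideanSpace ℝ (Fin d)) : Set (Fin N → ℝ) :=
  {b | ∀ i, ∃ x ∈ Qset a b, ⟪a i, x⟫ = b i}

section AuxAttain

variable {E : Type} [NormedAddCommGroup E] [InnerProductSpace ℝ E]

/-- The set of values of the objective `⟪c, ·⟫` over the polyhedron defined by `a, b`. -/
def valSet {ι : Type} (a : ι → E) (b : ι → ℝ) (c : E) : Set ℝ :=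
  {r | ∃ x, (∀ i, ⟪a i, x⟫ ≤ b i) ∧ ⟪c, x⟫ = r}

lemma valSet_nonempty {ι : Type} {a : ι → E} {b : ι → ℝ} (c : E)
    (hQ : ∃ x, ∀ i, ⟪a i, x⟫ ≤ b i) : (valSet a b c).Nonempty := by
  obtain ⟨x, hx⟩ := hQ
  exact ⟨⟪c, x⟫, x, hx, rfl⟩

/-- Bounded case of LP attainment: if the near-optimal slice is bounded, the sup is attained. -/
lemma attain_of_bounded [FiniteDimensional ℝ E] {ι : Type} [Fintype ι]
    (a : ι → E) (b : ι → ℝ) (c : E)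
    (hQ : ∃ x, ∀ i, ⟪a i, x⟫ ≤ b i)
    (hbdd : BddAbove (valSet a b c))
    (hT : IsBounded {x : E | (∀ i, ⟪a i, x⟫ ≤ b i) ∧ sSup (valSet a b c) - 1 ≤ ⟪c, x⟫}) :
    sSup (valSet a b c) ∈ valSet a b c := by
  set M := sSup (valSet a b c) with hM
  set T := {x : E | (∀ i, ⟪a i, x⟫ ≤ b i) ∧ M - 1 ≤ ⟪c, x⟫} with hTdef
  have hSne : (valSet a b c).Nonempty := valSet_nonempty c hQ
  -- T is nonempty
  have hTne : T.Nonempty := by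
    obtain ⟨r, hr, hr2⟩ := exists_lt_of_lt_csSup hSne (show M - 1 < M by linarith)
    obtain ⟨x, hx, hcx⟩ := hr
    exact ⟨x, hx, by rw [hcx]; linarith⟩
  -- T is closed
  have hTc : IsClosed T := by
    have h1 : IsClosed {x : E | ∀ i, ⟪a i, x⟫ ≤ b i} := by
      have he : {x : E | ∀ i, ⟪a i, x⟫ ≤ b i} = ⋂ i, {x : E | ⟪a i, x⟫ ≤ b i} := by
        ext x; simp
      rw [he]
      exact isClosed_iInter fun i =>
        isClosed_le (continuous_const.inner continuous_id) continuous_const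
    have h2 : IsClosed {x : E | M - 1 ≤ ⟪c, x⟫} :=
      isClosed_le continuous_const (continuous_const.inner continuous_id)
    exact h1.inter h2
  have hTcompact : IsCompact T := Metric.isCompact_of_isClosed_isBounded hTc hT
  obtain ⟨x, hxT, hxmax⟩ := hTcompact.exists_isMaxOn hTne
    ((continuous_const.inner continuous_id).continuousOn (s := T) (f := fun y => ⟪c, y⟫))
  refine ⟨x, hxT.1, le_antisymm (le_csSup hbdd ⟨x, hxT.1, rfl⟩) ?_⟩
  by_contra hlt
  push_neg at hlt
  obtain ⟨r, hr, hr2⟩ := exists_lt_of_lt_csSup hSne (show max (⟪c, x⟫) (M - 1) < M by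
    rcases max_cases (⟪c, x⟫) (M - 1) with ⟨h, _⟩ | ⟨h, _⟩ <;> rw [h] <;> linarith)
  obtain ⟨y, hy, hcy⟩ := hr
  have hyT : y ∈ T := ⟨hy, by rw [hcy]; exact le_of_lt (lt_of_le_of_lt (le_max_right _ _) hr2)⟩
  have := hxmax hyT
  simp only [Set.mem_setOf_eq, hcy] at this
  exact absurd (lt_of_le_of_lt this (lt_of_le_of_lt (le_max_left _ _) hr2)) (lt_irrefl _)

/-- LP attainment: the sup of a linear functional over a nonempty polyhedron,
if bounded above, is attained. Induction on the dimension. -/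
lemma attain_aux : ∀ (n : ℕ) (E : Type) [NormedAddCommGroup E] [InnerProductSpace ℝ E]
    [FiniteDimensional ℝ E], finrank ℝ E ≤ n → ∀ (ι : Type) [Fintype ι]
    (a : ι → E) (b : ι → ℝ) (c : E),
    (∃ x, ∀ i, ⟪a i, x⟫ ≤ b i) → BddAbove (valSet a b c) →
    sSup (valSet a b c) ∈ valSet a b c := by
  intro n
  induction n with
  | zero =>
    intro E _ _ _ hrank ι _ a b c hQ hbdd
    haveI : Subsingleton E := by
      have : finrank ℝ E = 0 := Nat.le_zero.mp hrank
      exact finrank_zero_iff.mp this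
    apply attain_of_bounded a b c hQ hbdd
    have hsub : {x : E | (∀ i, ⟪a i, x⟫ ≤ b i) ∧ sSup (valSet a b c) - 1 ≤ ⟪c, x⟫} ⊆ {(0 : E)} := by
      intro x _; exact Subsingleton.elim x 0
    exact (Bornology.isBounded_singleton (x := (0:E))).subset hsub
  | succ n IH =>
    intro E _ _ _ hrank ι _ a b c hQ hbdd
    by_cases hT : IsBounded {x : E | (∀ i, ⟪a i, x⟫ ≤ b i) ∧ sSup (valSet a b c) - 1 ≤ ⟪c, x⟫}
    · exact attain_of_bounded a b c hQ hbdd hT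
    · -- unbounded slice: find a recession direction v with ⟪c, v⟫ = 0
      set M := sSup (valSet a b c) with hM
      have hSne : (valSet a b c).Nonempty := valSet_nonempty c hQ
      have hex : ∀ k : ℕ, ∃ x : E, ((∀ i, ⟪a i, x⟫ ≤ b i) ∧ M - 1 ≤ ⟪c, x⟫) ∧ (k : ℝ) < ‖x‖ := by
        intro k
        by_contra hc
        push_neg at hc
        exact hT (isBounded_iff_forall_norm_le.2 ⟨k, fun x hx => hc x hx⟩)
      choose x hxT hxnorm using hex
      have hxpos : ∀ k, 0 < ‖x k‖ := fun k =>
        lt_of_le_of_lt (by exact_mod_cast Nat.zero_le k) (hxnorm k)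
      set u : ℕ → E := fun k => (‖x k‖)⁻¹ • x k with hu
      have husphere : ∀ k, u k ∈ Metric.sphere (0 : E) 1 := by
        intro k
        simp only [hu, mem_sphere_iff_norm, sub_zero, norm_smul, norm_inv, norm_norm]
        exact inv_mul_cancel₀ (ne_of_gt (hxpos k))
      obtain ⟨v, hvmem, φ, hφ, hφv⟩ := (isCompact_sphere (0:E) 1).tendsto_subseq husphere
      have hvnorm : ‖v‖ = 1 := by simpa [mem_sphere_iff_norm] using hvmem
      have hvne : v ≠ 0 := by intro h; rw [h, norm_zero] at hvnorm; exact one_ne_zero hvnorm.symm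
      -- norms along the subsequence tend to infinity
      have hnorm_top : Tendsto (fun k => ‖x (φ k)‖) atTop atTop := by
        refine tendsto_atTop_mono
          (fun k => le_trans (by exact_mod_cast hφ.le_apply) (le_of_lt (hxnorm (φ k))))
          tendsto_natCast_atTop_atTop
      have hinv0 : Tendsto (fun k => (‖x (φ k)‖)⁻¹) atTop (nhds 0) :=
        hnorm_top.inv_tendsto_atTop
      -- inner products with u tend to inner products with v
      have htend : ∀ w : E, Tendsto (fun k => ⟪w, u (φ k)⟫) atTop (nhds ⟪w, v⟫) :=
        fun w => tendsto_const_nhds.inner hφv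
      have hinner_u : ∀ (w : E) (k : ℕ), ⟪w, u k⟫ = (‖x k‖)⁻¹ * ⟪w, x k⟫ := by
        intro w k; simp [hu, real_inner_smul_right]
      -- v is a recession direction
      have hva : ∀ i, ⟪a i, v⟫ ≤ 0 := by
        intro i
        have h := le_of_tendsto_of_tendsto' (htend (a i)) (hinv0.mul_const (b i)) (fun k => by
          rw [hinner_u]
          exact mul_le_mul_of_nonneg_left ((hxT (φ k)).1 i) (le_of_lt (inv_pos.2 (hxpos _))))
        simpa using h
      -- the objective vanishes on v
      have hvc : ⟪c, v⟫ = 0 := by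
        have hub : ∀ k, ⟪c, x k⟫ ≤ M := fun k => le_csSup hbdd ⟨x k, (hxT k).1, rfl⟩
        have h1 : ⟪c, v⟫ ≤ 0 := by
          have h := le_of_tendsto_of_tendsto' (htend c) (hinv0.mul_const M) (fun k => by
            rw [hinner_u]
            exact mul_le_mul_of_nonneg_left (hub (φ k)) (le_of_lt (inv_pos.2 (hxpos _))))
          simpa using h
        have h2 : (0 : ℝ) ≤ ⟪c, v⟫ := by
          have h := le_of_tendsto_of_tendsto' (hinv0.mul_const (M - 1)) (htend c) (fun k => by
            rw [hinner_u]
            exact mul_le_mul_of_nonneg_left (hxT (φ k)).2 (le_of_lt (inv_pos.2 (hxpos _))))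
          simpa using h
        linarith
      -- pass to the orthogonal complement of v
      set K : Submodule ℝ E := (ℝ ∙ v)ᗮ with hK
      have hrankK : finrank ℝ K ≤ n := by
        have h1 : finrank ℝ (ℝ ∙ v) + finrank ℝ K = finrank ℝ E :=
          (ℝ ∙ v).finrank_add_finrank_orthogonal
        have h2 : finrank ℝ (ℝ ∙ v) = 1 := finrank_span_singleton hvne
        omega
      have hmemK : ∀ y : E, y ∈ K ↔ ⟪v, y⟫ = 0 := fun y =>
        Submodule.mem_orthogonal_singleton_iff_inner_right
      have hproj : ∀ (w : E) (y : K), ⟪(K.orthogonalProjectionOnto w : K), y⟫ = ⟪w, (y : E)⟫ := by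
        intro w y
        have h := K.starProjection_inner_eq_zero w y y.2
        rw [Submodule.starProjection_apply] at h
        have h2 : ⟪(K.orthogonalProjectionOnto w : K), y⟫ =
            ⟪((K.orthogonalProjectionOnto w : K) : E), (y : E)⟫ := rfl
        rw [inner_sub_left] at h
        rw [h2]; linarith
      haveI : Fintype {i : ι // ⟪a i, v⟫ = 0} := Fintype.ofFinite _
      set a' : {i : ι // ⟪a i, v⟫ = 0} → K := fun i => K.orthogonalProjectionOnto (a i.1) with ha'
      set b' : {i : ι // ⟪a i, v⟫ = 0} → ℝ := fun i => b i.1 with hb'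
      set c' : K := K.orthogonalProjectionOnto c with hc'
      -- projection into K: x ↦ x - ⟪v, x⟫ • v
      have hprojmem : ∀ z : E, (z - ⟪v, z⟫ • v) ∈ K := by
        intro z
        rw [hmemK]
        rw [inner_sub_right, real_inner_smul_right, real_inner_self_eq_norm_sq, hvnorm]
        ring
      -- the two value sets coincide
      have hSS : valSet a' b' c' = valSet a b c := by
        ext r
        constructor
        · rintro ⟨y, hy, hcy⟩
          -- lift y back to Q by adding a big multiple of v
          set g : ι → ℝ := fun i => max 0 ((⟪a i, (y : E)⟫ - b i) / (-⟪a i, v⟫)) with hg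
          set t : ℝ := ∑ i, g i with ht
          have hgnonneg : ∀ i, 0 ≤ g i := fun i => le_max_left _ _
          have htge : ∀ i, g i ≤ t := fun i =>
            Finset.single_le_sum (fun j _ => hgnonneg j) (Finset.mem_univ i)
          refine ⟨(y : E) + t • v, ?_, ?_⟩
          · intro i
            rw [inner_add_right, real_inner_smul_right]
            by_cases hai : ⟪a i, v⟫ = 0
            · rw [hai, mul_zero, add_zero]
              have := hy ⟨i, hai⟩
              rw [hproj] at this
              exact this
            · have hneg : ⟪a i, v⟫ < 0 := lt_of_le_of_ne (hva i) hai
              have h1 : t * ⟪a i, v⟫ ≤ g i * ⟪a i, v⟫ :=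
                mul_le_mul_of_nonpos_right (htge i) (le_of_lt hneg)
              have h2 : (⟪a i, (y : E)⟫ - b i) / (-⟪a i, v⟫) ≤ g i := le_max_right _ _
              have h3 : ⟪a i, (y : E)⟫ - b i ≤ g i * (-⟪a i, v⟫) :=
                (div_le_iff₀ (by linarith)).mp h2
              nlinarith
          · rw [inner_add_right, real_inner_smul_right, hvc, mul_zero, add_zero]
            rw [← hcy, hc', hproj]
        · rintro ⟨z, hz, hcz⟩
          refine ⟨⟨z - ⟪v, z⟫ • v, hprojmem z⟩, ?_, ?_⟩
          · intro i
            rw [ha']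
            show ⟪(K.orthogonalProjectionOnto (a i.1) : K), (⟨z - ⟪v, z⟫ • v, hprojmem z⟩ : K)⟫ ≤ b i.1
            rw [hproj]
            show ⟪a i.1, z - ⟪v, z⟫ • v⟫ ≤ b i.1
            rw [inner_sub_right, real_inner_smul_right, i.2, mul_zero, sub_zero]
            exact hz i.1
          · rw [hc', hproj]
            show ⟪c, z - ⟪v, z⟫ • v⟫ = r
            rw [inner_sub_right, real_inner_smul_right, hvc, mul_zero, sub_zero, hcz]
      have hQ' : ∃ y : K, ∀ i, ⟪a' i, y⟫ ≤ b' i := by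
        obtain ⟨z, hz⟩ := hQ
        refine ⟨⟨z - ⟪v, z⟫ • v, hprojmem z⟩, fun i => ?_⟩
        rw [ha']
        show ⟪(K.orthogonalProjectionOnto (a i.1) : K), (⟨z - ⟪v, z⟫ • v, hprojmem z⟩ : K)⟫ ≤ b i.1
        rw [hproj]
        show ⟪a i.1, z - ⟪v, z⟫ • v⟫ ≤ b i.1
        rw [inner_sub_right, real_inner_smul_right, i.2, mul_zero, sub_zero]
        exact hz i.1
      have hbdd' : BddAbove (valSet a' b' c') := by rw [hSS]; exact hbdd
      have := IH K hrankK _ a' b' c' hQ' hbdd'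
      rw [hSS] at this
      exact this

end AuxAttain

theorem stmt_0 (d N : ℕ) (hd : 1 ≤ d) (hN : 1 ≤ N)
    (a : Fin N → EuclideanSpace ℝ (Fin d))
    (ha_inj : Function.Injective a) (ha_norm : ∀ i, ‖a i‖ = 1)
    (btil : Fin N → ℝ) (hne : (Qset a btil).Nonempty)
    (b : Fin N → ℝ)
    (hb : ∀ i, b i = sSup {r | ∃ x ∈ Qset a btil, ⟪a i, x⟫ = r}) :
    b ∈ CA a ∧ b ≤ btil ∧ Qset a b = Qset a btil := by
  have hset : ∀ i, {r | ∃ x ∈ Qset a btil, ⟪a i, x⟫ = r} = valSet a btil (a i) := by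
    intro i; ext r; simp [Qset, valSet]
  have hQex : ∃ x, ∀ j, ⟪a j, x⟫ ≤ btil j := hne
  have hbdd : ∀ i, BddAbove (valSet a btil (a i)) := by
    intro i
    refine ⟨btil i, fun r hr => ?_⟩
    obtain ⟨x, hx, hcx⟩ := hr
    rw [← hcx]; exact hx i
  have hble : ∀ i, b i ≤ btil i := by
    intro i
    rw [hb i, hset i]
    exact csSup_le (valSet_nonempty _ hQex) (fun r ⟨x, hx, hcx⟩ => hcx ▸ hx i)
  have hQeq : Qset a b = Qset a btil := by
    ext x
    constructor
    · intro hx i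
      exact le_trans (hx i) (hble i)
    · intro hx i
      rw [hb i, hset i]
      exact le_csSup (hbdd i) ⟨x, hx, rfl⟩
  refine ⟨?_, hble, hQeq⟩
  intro i
  have := attain_aux (finrank ℝ (EuclideanSpace ℝ (Fin d))) _ le_rfl _ a btil (a i) hQex (hbdd i)
  obtain ⟨x, hx, hcx⟩ := this
  refine ⟨x, ?_, ?_⟩
  · rw [hQeq]; exact hx
  · rw [hcx, hb i, hset i]
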